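/- Let f_150 be the local rule f_150(a,b,c) = a + b + c. For every integer n ≥ 1, the free-boundary transition function (f_150)_{(n),*-*} and the cyclic-boundary transition function (f_150)_{(n),*} on Q^n are bijective if and only if n is not divisible by 3; that is, CA-150_{*-*}(n) and CA-150_{*}(n) are reversible iff n ≢ 0 (mod 3). -/
import Mathlib


/-- The state set `Q = {0,1}` as `ZMod 2`. -/
abbrev Q : Type := ZMod 2

/-- A triplet local rule `f : Q³ → Q`. -/
abbrev Rule : Type := Q → Q → Q → Q

/-- A configuration of length `n`. -/
abbrev Config (n : ℕ) : Type := Fin n → Q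

/-- The transition sending `x` to the word whose `i`-th letter is
`f (x (i-1)) (x i) (x (i+1))`, where the virtual boundary letters
`x₀` and `x_{n+1}` are given as `x0` and `xn1`. -/
def caTrans {n : ℕ} (f : Rule) (x0 xn1 : Q) (x : Config n) : Config n :=
  fun i =>
    f (if _h : i.1 = 0 then x0
       else x ⟨i.1 - 1, Nat.lt_of_le_of_lt (Nat.sub_le _ _) i.isLt⟩)
      (x i)
      (if h : i.1 + 1 < n then x ⟨i.1 + 1, h⟩ else xn1)

/-- The first letter `x₁` of a nonempty configuration. -/
def firstCell {n : ℕ} (hn : 0 < n) (x : Config n) : Q := x ⟨0, hn⟩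

/-- The last letter `xₙ` of a nonempty configuration. -/
def lastCell {n : ℕ} (hn : 0 < n) (x : Config n) : Q :=
  x ⟨n - 1, Nat.sub_lt hn Nat.one_pos⟩

/-- Fixed boundary `a-b` : `x₀ = a`, `x_{n+1} = b`. -/
def fixedBC {n : ℕ} (f : Rule) (a b : Q) : Config n → Config n :=
  fun x => caTrans f a b x

/-- Boundary `a-*` : `x₀ = a`, `x_{n+1} = xₙ`. -/
def leftFixedBC {n : ℕ} (hn : 0 < n) (f : Rule) (a : Q) : Config n → Config n :=
  fun x => caTrans f a (lastCell hn x) x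

/-- Boundary `*-b` : `x₀ = x₁`, `x_{n+1} = b`. -/
def rightFixedBC {n : ℕ} (hn : 0 < n) (f : Rule) (b : Q) : Config n → Config n :=
  fun x => caTrans f (firstCell hn x) b x

/-- Free boundary `*-*` : `x₀ = x₁`, `x_{n+1} = xₙ`. -/
def freeBC {n : ℕ} (hn : 0 < n) (f : Rule) : Config n → Config n :=
  fun x => caTrans f (firstCell hn x) (lastCell hn x) x

/-- Cyclic boundary `*` : `x₀ = xₙ`, `x_{n+1} = x₁`. -/
def cyclicBC {n : ℕ} (hn : 0 < n) (f : Rule) : Config n → Config n :=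
  fun x => caTrans f (lastCell hn x) (firstCell hn x) x

/-- Rule 150 : `f(a,b,c) = a + b + c`. -/
def f150 : Rule := fun a b c => a + b + c

section Aux

/-- Evaluation at an interior index. -/
lemma caTrans_interior {n : ℕ} (f : Rule) (a b : Q) (x : Config n) (j : ℕ)
    (h1 : j ≠ 0) (h2 : j + 1 < n) :
    caTrans f a b x ⟨j, by omega⟩ = f (x ⟨j - 1, by omega⟩) (x ⟨j, by omega⟩) (x ⟨j + 1, h2⟩) := by
  simp [caTrans, h1, h2]

lemma caTrans_left {n : ℕ} (f : Rule) (a b : Q) (x : Config n) (h2 : 1 < n) :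
    caTrans f a b x ⟨0, by omega⟩ = f a (x ⟨0, by omega⟩) (x ⟨1, h2⟩) := by
  simp [caTrans, h2]

lemma caTrans_right {n : ℕ} (f : Rule) (a b : Q) (x : Config n) (h2 : 2 ≤ n) :
    caTrans f a b x ⟨n - 1, by omega⟩
      = f (x ⟨n - 2, by omega⟩) (x ⟨n - 1, by omega⟩) b := by
  have e1 : n - 1 ≠ 0 := by omega
  have e2 : ¬ (n - 1 + 1 < n) := by omega
  have e3 : n - 1 - 1 = n - 2 := by omega
  simp [caTrans, e1, e2, e3]

lemma caTrans_single (f : Rule) (a b : Q) (x : Config 1) :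
    caTrans f a b x ⟨0, by omega⟩ = f a (x ⟨0, by omega⟩) b := by
  simp [caTrans]

lemma zmod2_eq_of_add_eq_zero : ∀ a b : ZMod 2, a + b = 0 → a = b := by decide

lemma zmod2_third : ∀ a b c : ZMod 2, a + b + c = 0 → c = a + b := by decide

lemma freeBC_add {n : ℕ} (hn : 0 < n) (x y : Config n) :
    freeBC hn f150 (x + y) = freeBC hn f150 x + freeBC hn f150 y := by
  funext i
  simp only [freeBC, caTrans, f150, firstCell, lastCell, Pi.add_apply]
  split_ifs <;> ring

lemma cyclicBC_add {n : ℕ} (hn : 0 < n) (x y : Config n) :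
    cyclicBC hn f150 (x + y) = cyclicBC hn f150 x + cyclicBC hn f150 y := by
  funext i
  simp only [cyclicBC, caTrans, f150, firstCell, lastCell, Pi.add_apply]
  split_ifs <;> ring

lemma freeBC_zero {n : ℕ} (hn : 0 < n) : freeBC hn f150 0 = 0 := by
  funext i
  simp only [freeBC, caTrans, f150, firstCell, lastCell, Pi.zero_apply]
  split_ifs <;> decide

lemma cyclicBC_zero {n : ℕ} (hn : 0 < n) : cyclicBC hn f150 0 = 0 := by
  funext i
  simp only [cyclicBC, caTrans, f150, firstCell, lastCell, Pi.zero_apply]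
  split_ifs <;> decide

lemma inj_of_ker {n : ℕ} (g : Config n → Config n)
    (hadd : ∀ x y, g (x + y) = g x + g y)
    (hker : ∀ x, g x = 0 → x = 0) : Function.Injective g := by
  intro x y h
  have hz : g (x + y) = 0 := by
    rw [hadd, h]
    funext i
    have h2 : ∀ a : ZMod 2, a + a = 0 := by decide
    simpa using h2 (g y i)
  have hxy : x + y = 0 := hker _ hz
  funext i
  exact zmod2_eq_of_add_eq_zero _ _ (congrFun hxy i)

/-- interior recurrence forces the period-3 pattern. -/
lemma pattern {n : ℕ} (hn2 : 2 ≤ n) (x : Config n) (a b : Q)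
    (ha : x ⟨0, by omega⟩ = a) (hb : x ⟨1, by omega⟩ = b)
    (hrec : ∀ j, 1 ≤ j → ∀ h2 : j + 1 < n,
      x ⟨j - 1, by omega⟩ + x ⟨j, by omega⟩ + x ⟨j + 1, h2⟩ = 0) :
    ∀ i, ∀ h : i < n, x ⟨i, h⟩ =
      if i % 3 = 0 then a else if i % 3 = 1 then b else a + b := by
  intro i
  induction i using Nat.strong_induction_on with
  | _ i ih =>
    match i, ih with
    | 0, _ => intro h; simpa using ha
    | 1, _ => intro h; simpa using hb
    | (k+2), ih =>
      intro h
      have hr := hrec (k+1) (by omega) (by omega : k + 1 + 1 < n)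
      have hstep : x ⟨k+2, h⟩ = x ⟨k, by omega⟩ + x ⟨k+1, by omega⟩ :=
        zmod2_third _ _ _ hr
      have hk := ih k (by omega) (by omega)
      have hk1 := ih (k+1) (by omega) (by omega)
      rw [hstep, hk, hk1]
      rcases (show k % 3 = 0 ∨ k % 3 = 1 ∨ k % 3 = 2 by omega) with h3 | h3 | h3
      · simp [h3, show (k+1)%3 = 1 by omega, show (k+2)%3 = 2 by omega]
      · simp only [h3, show (k+1)%3 = 2 by omega, show (k+2)%3 = 0 by omega]
        norm_num
        exact (by decide : ∀ a b : ZMod 2, b + (a + b) = a) a b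
      · simp only [h3, show (k+1)%3 = 0 by omega, show (k+2)%3 = 1 by omega]
        norm_num
        exact (by decide : ∀ a b : ZMod 2, (a + b) + a = b) a b

end Aux
lemma zmod2_self3 : ∀ a : ZMod 2, a + a + a = 0 → a = 0 := by decide
lemma zmod2_first : ∀ a c : ZMod 2, a + a + c = 0 → c = 0 := by decide
lemma zmod2_last : ∀ a c : ZMod 2, a + c + c = 0 → a = 0 := by decide

lemma free_ker {n : ℕ} (hn : 1 ≤ n) (h3 : n % 3 ≠ 0) (x : Config n)
    (hx : freeBC hn f150 x = 0) : x = 0 := by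
  rcases eq_or_lt_of_le hn with h1 | h2
  · -- n = 1
    subst h1
    have e := congrFun hx ⟨0, by omega⟩
    simp only [freeBC] at e
    rw [caTrans_single] at e
    simp only [f150, firstCell, lastCell, Pi.zero_apply] at e
    have h0 : x ⟨0, by omega⟩ = 0 := zmod2_self3 _ e
    funext i
    have : i = ⟨0, by omega⟩ := Subsingleton.elim _ _
    rw [this, h0]; rfl
  · -- n ≥ 2
    have hrec : ∀ j, 1 ≤ j → ∀ hj : j + 1 < n,
        x ⟨j - 1, by omega⟩ + x ⟨j, by omega⟩ + x ⟨j + 1, hj⟩ = 0 := by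
      intro j hj1 hj2
      have e := congrFun hx ⟨j, by omega⟩
      simp only [freeBC] at e
      rw [caTrans_interior _ _ _ _ j (by omega) hj2] at e
      simpa [f150] using e
    have hb : x ⟨1, h2⟩ = 0 := by
      have e := congrFun hx ⟨0, by omega⟩
      simp only [freeBC] at e
      rw [caTrans_left _ _ _ _ h2] at e
      simp only [f150, firstCell, Pi.zero_apply] at e
      exact zmod2_first _ _ e
    have hpat := pattern h2 x (x ⟨0, by omega⟩) 0 rfl hb hrec
    have hn2 : x ⟨n - 2, by omega⟩ = 0 := by
      have e := congrFun hx ⟨n - 1, by omega⟩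
      simp only [freeBC] at e
      rw [caTrans_right _ _ _ _ h2] at e
      simp only [f150, lastCell, Pi.zero_apply] at e
      exact zmod2_last _ _ e
    have ha : x ⟨0, by omega⟩ = 0 := by
      have hv := hpat (n - 2) (by omega)
      rw [hn2] at hv
      rcases (show (n-2) % 3 = 0 ∨ (n-2) % 3 = 2 by omega) with hm | hm
      · simpa [hm] using hv.symm
      · simpa [hm] using hv.symm
    have hpat2 := pattern h2 x 0 0 ha hb hrec
    funext i
    have hv := hpat2 i.1 i.isLt
    simp only [Fin.eta] at hv
    rcases (show i.1 % 3 = 0 ∨ i.1 % 3 = 1 ∨ i.1 % 3 = 2 by omega) with hm | hm | hm <;>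
      simpa [hm] using hv

lemma zmod2_cyc1 : ∀ a b : ZMod 2, a + a + b = 0 → a + b + a + a = 0 → a = 0 ∧ b = 0 := by decide
lemma zmod2_cyc2 : ∀ a b : ZMod 2, b + a + b = 0 → a + b + a = 0 → a = 0 ∧ b = 0 := by decide

lemma cyclic_ker {n : ℕ} (hn : 1 ≤ n) (h3 : n % 3 ≠ 0) (x : Config n)
    (hx : cyclicBC hn f150 x = 0) : x = 0 := by
  rcases eq_or_lt_of_le hn with h1 | h2
  · subst h1
    have e := congrFun hx ⟨0, by omega⟩
    simp only [cyclicBC] at e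
    rw [caTrans_single] at e
    simp only [f150, firstCell, lastCell, Pi.zero_apply] at e
    have h0 : x ⟨0, by omega⟩ = 0 := zmod2_self3 _ e
    funext i
    have : i = ⟨0, by omega⟩ := Subsingleton.elim _ _
    rw [this, h0]; rfl
  · have hrec : ∀ j, 1 ≤ j → ∀ hj : j + 1 < n,
        x ⟨j - 1, by omega⟩ + x ⟨j, by omega⟩ + x ⟨j + 1, hj⟩ = 0 := by
      intro j hj1 hj2
      have e := congrFun hx ⟨j, by omega⟩
      simp only [cyclicBC] at e
      rw [caTrans_interior _ _ _ _ j (by omega) hj2] at e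
      simpa [f150] using e
    have hpat := pattern h2 x (x ⟨0, by omega⟩) (x ⟨1, h2⟩) rfl rfl hrec
    have e0 : x ⟨n - 1, by omega⟩ + x ⟨0, by omega⟩ + x ⟨1, h2⟩ = 0 := by
      have e := congrFun hx ⟨0, by omega⟩
      simp only [cyclicBC] at e
      rw [caTrans_left _ _ _ _ h2] at e
      simpa [f150, lastCell] using e
    have en : x ⟨n - 2, by omega⟩ + x ⟨n - 1, by omega⟩ + x ⟨0, by omega⟩ = 0 := by
      have e := congrFun hx ⟨n - 1, by omega⟩
      simp only [cyclicBC] at e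
      rw [caTrans_right _ _ _ _ h2] at e
      simpa [f150, firstCell] using e
    have hab : x ⟨0, by omega⟩ = 0 ∧ x ⟨1, h2⟩ = 0 := by
      rcases (show n % 3 = 1 ∨ n % 3 = 2 by omega) with hm | hm
      · rw [hpat (n-1) (by omega)] at e0 en
        rw [hpat (n-2) (by omega)] at en
        rw [if_pos (by omega : (n-1) % 3 = 0)] at e0 en
        rw [if_neg (by omega : ¬ (n-2) % 3 = 0), if_neg (by omega : ¬ (n-2) % 3 = 1)] at en
        exact zmod2_cyc1 _ _ e0 (by linear_combination en)
      · rw [hpat (n-1) (by omega)] at e0 en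
        rw [hpat (n-2) (by omega)] at en
        rw [if_neg (by omega : ¬ (n-1) % 3 = 0), if_pos (by omega : (n-1) % 3 = 1)] at e0 en
        rw [if_pos (by omega : (n-2) % 3 = 0)] at en
        exact zmod2_cyc2 _ _ e0 en
    have hpat2 := pattern h2 x 0 0 hab.1 hab.2 hrec
    funext i
    have hv := hpat2 i.1 i.isLt
    simp only [Fin.eta] at hv
    rcases (show i.1 % 3 = 0 ∨ i.1 % 3 = 1 ∨ i.1 % 3 = 2 by omega) with hm | hm | hm <;>
      simpa [hm] using hv
def wfree (n : ℕ) : Config n := fun i => if i.1 % 3 = 1 then 0 else 1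
def wcyc (n : ℕ) : Config n := fun i => if i.1 % 3 = 2 then 0 else 1

lemma wfree_spec {n : ℕ} (hn : 1 ≤ n) (h3 : n % 3 = 0) :
    freeBC hn f150 (wfree n) = 0 := by
  have hn3 : 3 ≤ n := by omega
  funext i
  rcases i with ⟨i, hi⟩
  simp only [freeBC, Pi.zero_apply]
  rcases Nat.eq_zero_or_pos i with rfl | hip
  · rw [caTrans_left _ _ _ _ (by omega : 1 < n)]
    simp only [f150, firstCell, wfree, if_neg (by omega : ¬ (0:ℕ) % 3 = 1),
      if_pos (by omega : (1:ℕ) % 3 = 1)]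
    decide
  · by_cases hlast : i = n - 1
    · subst hlast
      rw [caTrans_right _ _ _ _ (by omega : 2 ≤ n)]
      simp only [f150, lastCell, wfree,
        if_pos (by omega : (n-2) % 3 = 1), if_neg (by omega : ¬ (n-1) % 3 = 1)]
      decide
    · rw [caTrans_interior _ _ _ _ i (by omega) (by omega)]
      simp only [f150, wfree]
      rcases (show i % 3 = 0 ∨ i % 3 = 1 ∨ i % 3 = 2 by omega) with hm | hm | hm
      · rw [if_neg (by omega : ¬ (i-1) % 3 = 1), if_neg (by omega : ¬ i % 3 = 1),
          if_pos (by omega : (i+1) % 3 = 1)]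
        decide
      · rw [if_neg (by omega : ¬ (i-1) % 3 = 1), if_pos hm,
          if_neg (by omega : ¬ (i+1) % 3 = 1)]
        decide
      · rw [if_pos (by omega : (i-1) % 3 = 1), if_neg (by omega : ¬ i % 3 = 1),
          if_neg (by omega : ¬ (i+1) % 3 = 1)]
        decide

lemma wcyc_spec {n : ℕ} (hn : 1 ≤ n) (h3 : n % 3 = 0) :
    cyclicBC hn f150 (wcyc n) = 0 := by
  have hn3 : 3 ≤ n := by omega
  funext i
  rcases i with ⟨i, hi⟩
  simp only [cyclicBC, Pi.zero_apply]
  rcases Nat.eq_zero_or_pos i with rfl | hip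
  · rw [caTrans_left _ _ _ _ (by omega : 1 < n)]
    simp only [f150, lastCell, wcyc,
      if_pos (by omega : (n-1) % 3 = 2), if_neg (by omega : ¬ (0:ℕ) % 3 = 2),
      if_neg (by omega : ¬ (1:ℕ) % 3 = 2)]
    decide
  · by_cases hlast : i = n - 1
    · subst hlast
      rw [caTrans_right _ _ _ _ (by omega : 2 ≤ n)]
      simp only [f150, firstCell, wcyc,
        if_neg (by omega : ¬ (n-2) % 3 = 2), if_pos (by omega : (n-1) % 3 = 2),
        if_neg (by omega : ¬ (0:ℕ) % 3 = 2)]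
      decide
    · rw [caTrans_interior _ _ _ _ i (by omega) (by omega)]
      simp only [f150, wcyc]
      rcases (show i % 3 = 0 ∨ i % 3 = 1 ∨ i % 3 = 2 by omega) with hm | hm | hm
      · rw [if_pos (by omega : (i-1) % 3 = 2), if_neg (by omega : ¬ i % 3 = 2),
          if_neg (by omega : ¬ (i+1) % 3 = 2)]
        decide
      · rw [if_neg (by omega : ¬ (i-1) % 3 = 2), if_neg (by omega : ¬ i % 3 = 2),
          if_pos (by omega : (i+1) % 3 = 2)]
        decide
      · rw [if_neg (by omega : ¬ (i-1) % 3 = 2), if_pos hm,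
          if_neg (by omega : ¬ (i+1) % 3 = 2)]
        decide

lemma wfree_ne {n : ℕ} (hn : 1 ≤ n) : wfree n ≠ 0 := by
  intro h
  have h0 := congrFun h ⟨0, hn⟩
  rw [show wfree n ⟨0, hn⟩ = 1 from rfl, Pi.zero_apply] at h0
  exact one_ne_zero h0

lemma wcyc_ne {n : ℕ} (hn : 1 ≤ n) : wcyc n ≠ 0 := by
  intro h
  have h0 := congrFun h ⟨0, hn⟩
  rw [show wcyc n ⟨0, hn⟩ = 1 from rfl, Pi.zero_apply] at h0
  exact one_ne_zero h0

theorem statement15 (n : ℕ) (hn : 1 ≤ n) :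
    (Function.Bijective (freeBC hn f150) ↔ n % 3 ≠ 0) ∧
    (Function.Bijective (cyclicBC hn f150) ↔ n % 3 ≠ 0) := by
  constructor
  · constructor
    · intro hb
      by_contra h3
      exact wfree_ne hn (hb.injective (by rw [wfree_spec hn h3, freeBC_zero]))
    · intro h3
      exact Finite.injective_iff_bijective.mp
        (inj_of_ker _ (freeBC_add hn) (free_ker hn h3))
  · constructor
    · intro hb
      by_contra h3
      exact wcyc_ne hn (hb.injective (by rw [wcyc_spec hn h3, cyclicBC_zero]))
    · intro h3
      exact Finite.injective_iff_bijective.mp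
        (inj_of_ker _ (cyclicBC_add hn) (cyclic_ker hn h3))
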